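/- Let λ be an algebraic number of degree d whose conjugates all have absolute value at most H+1, and suppose some positive integer N ≤ H satisfies that Nλ is an algebraic integer. If f ∈ ℤ[X] has degree at most D and coefficients bounded in absolute value by M, and f(λ) ≠ 0, then |f(λ)| ≥ N^{-dD} · ((D+1)·M·(H+1)^D)^{-(d-1)}. -/

import Mathlib

open Polynomial
open IntermediateField

/-- Let `λ` be an algebraic number of degree `d` whose conjugates all have
absolute value at most `H+1`, and suppose some positive integer `N ≤ H` is such
that `Nλ` is an algebraic integer.  If `f ∈ ℤ[X]` has degree at most `D` and
coefficients bounded by `M`, and `f(λ) ≠ 0`, then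
`|f(λ)| ≥ N^{-dD} ((D+1) M (H+1)^D)^{-(d-1)}`. -/
theorem stmt5 (lam : ℂ) (halg : IsAlgebraic ℚ lam)
    (d : ℕ) (hd : d = (minpoly ℚ lam).natDegree) (hd0 : 0 < d)
    (conj : Fin d → ℂ) (hconj0 : conj ⟨0, hd0⟩ = lam)
    (hroots : ((minpoly ℚ lam).aroots ℂ) = (Finset.univ.val.map conj))
    (H : ℕ) (hbound : ∀ j, ‖conj j‖ ≤ (H : ℝ) + 1)
    (N : ℕ) (hN : 0 < N) (hNH : N ≤ H) (hint : IsIntegral ℤ ((N : ℂ) * lam))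
    (f : Polynomial ℤ) (D : ℕ) (hD : f.natDegree ≤ D)
    (M : ℝ) (hM : ∀ i, |(f.coeff i : ℝ)| ≤ M)
    (hf : Polynomial.aeval lam f ≠ 0) :
    ‖Polynomial.aeval lam f‖ ≥
      ((N : ℝ) ^ (d * D))⁻¹ * ((((D : ℝ) + 1) * M * ((H : ℝ) + 1) ^ D) ^ (d - 1))⁻¹ := by
  classical
  have hint' : IsIntegral ℚ lam := halg.isIntegral
  haveI : FiniteDimensional ℚ ℚ⟮lam⟯ := IntermediateField.adjoin.finiteDimensional hint'
  set α : ℚ⟮lam⟯ := AdjoinSimple.gen ℚ lam with hα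
  have hαmap : algebraMap ℚ⟮lam⟯ ℂ α = lam := AdjoinSimple.algebraMap_gen ℚ lam
  -- x is an algebraic integer
  have hNα : IsIntegral ℤ ((N : ℚ⟮lam⟯) * α) := by
    rw [← isIntegral_algebraMap_iff (algebraMap ℚ⟮lam⟯ ℂ).injective]
    rwa [map_mul, map_natCast, hαmap]
  set x : ℚ⟮lam⟯ := (N : ℚ⟮lam⟯) ^ D * (aeval α f) with hxdef
  have hx_eq : x = ∑ i ∈ Finset.range (D+1),
      algebraMap ℤ ℚ⟮lam⟯ (f.coeff i * (N:ℤ) ^ (D-i)) * ((N : ℚ⟮lam⟯) * α) ^ i := by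
    rw [hxdef, Polynomial.aeval_eq_sum_range' (lt_of_le_of_lt hD (Nat.lt_succ_self D)),
      Finset.mul_sum]
    refine Finset.sum_congr rfl fun i hi => ?_
    have hiD : (D - i) + i = D := Nat.sub_add_cancel (Nat.lt_succ_iff.mp (Finset.mem_range.mp hi))
    rw [zsmul_eq_mul, map_mul, mul_pow]
    push_cast
    rw [show ((N:ℚ⟮lam⟯))^D = ((N:ℚ⟮lam⟯))^(D-i) * ((N:ℚ⟮lam⟯))^i from by rw [← pow_add, hiD]]
    simp only [algebraMap_int_eq, Int.coe_castRingHom]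
    ring
  have hxint : IsIntegral ℤ x := by
    have : x ∈ integralClosure ℤ ℚ⟮lam⟯ := by
      rw [hx_eq]
      exact Subalgebra.sum_mem _ fun i _ => Subalgebra.mul_mem _
        (Subalgebra.algebraMap_mem _ _) (Subalgebra.pow_mem _ hNα i)
    exact this
  have hx0 : x ≠ 0 := by
    rw [hxdef]
    refine mul_ne_zero (pow_ne_zero _ (Nat.cast_ne_zero.mpr hN.ne')) ?_
    intro h
    apply hf
    have := congrArg (algebraMap ℚ⟮lam⟯ ℂ) h
    rwa [← Polynomial.aeval_algebraMap_apply, hαmap, map_zero] at this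
  -- the norm is a nonzero integer
  obtain ⟨z, hz⟩ := IsIntegrallyClosed.isIntegral_iff.mp (Algebra.isIntegral_norm ℚ hxint)
  have hz0 : z ≠ 0 := by
    rintro rfl
    rw [map_zero] at hz
    exact Algebra.norm_ne_zero_iff.mpr hx0 hz.symm
  -- roots are distinct
  have hsep : ((minpoly ℚ lam).map (algebraMap ℚ ℂ)).Separable :=
    ((minpoly.irreducible hint').separable).map
  have hnodup : ((minpoly ℚ lam).aroots ℂ).Nodup := nodup_roots hsep
  -- product over embeddings equals product over conjugates
  have key : ∀ (u : ℂ → ℝ), ∏ σ : ℚ⟮lam⟯ →ₐ[ℚ] ℂ, u (σ α) = ∏ j : Fin d, u (conj j) := by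
    intro u
    set e := IntermediateField.algHomAdjoinIntegralEquiv ℚ (K := ℂ) hint' with he
    have hgen : ∀ σ : ℚ⟮lam⟯ →ₐ[ℚ] ℂ, σ α = ((e σ : ℂ)) := by
      intro σ
      conv_lhs => rw [← e.symm_apply_apply σ]
      exact IntermediateField.algHomAdjoinIntegralEquiv_symm_apply_gen ℚ hint' (e σ)
    refine (Fintype.prod_equiv e (fun σ => u (σ α)) (fun t => u (t : ℂ)) (fun σ => congrArg u (hgen σ))).trans ?_
    rw [← Finset.prod_subtype ((minpoly ℚ lam).aroots ℂ).toFinset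
      (fun y => Multiset.mem_toFinset) (fun y => u y)]
    rw [Finset.prod_eq_multiset_prod, Multiset.toFinset_val,
      Multiset.dedup_eq_self.mpr hnodup, hroots, Multiset.map_map,
      Finset.prod_eq_multiset_prod]
    rfl
  -- values of x under the embeddings
  have hsigma : ∀ σ : ℚ⟮lam⟯ →ₐ[ℚ] ℂ, σ x = (N:ℂ)^D * (aeval (σ α) f) := by
    intro σ
    have h2 : σ (aeval α f) = aeval (σ α) f :=
      (Polynomial.aeval_algHom_apply (σ.restrictScalars ℤ) α f).symm
    rw [hxdef, map_mul, map_pow, map_natCast, h2]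
  -- the key product lower bound
  have habs : (1:ℝ) ≤ ∏ j : Fin d, ((N:ℝ)^D * ‖aeval (conj j) f‖) := by
    have hzc : ((z:ℂ)) = ∏ σ : ℚ⟮lam⟯ →ₐ[ℚ] ℂ, σ x := by
      have h3 := Algebra.norm_eq_prod_embeddings ℚ ℂ x
      rw [← hz] at h3
      rw [← h3]
      simp
    calc (1:ℝ) ≤ |(z:ℝ)| := by rw [← Int.cast_abs]; exact_mod_cast Int.one_le_abs hz0
      _ = ‖(z:ℂ)‖ := by rw [Complex.norm_intCast]
      _ = ∏ σ : ℚ⟮lam⟯ →ₐ[ℚ] ℂ, ‖σ x‖ := by rw [hzc, norm_prod]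
      _ = ∏ σ : ℚ⟮lam⟯ →ₐ[ℚ] ℂ, ((N:ℝ)^D * ‖aeval (σ α) f‖) := by
          refine Finset.prod_congr rfl fun σ _ => ?_
          rw [hsigma σ, norm_mul, norm_pow, Complex.norm_natCast]
      _ = ∏ j : Fin d, ((N:ℝ)^D * ‖aeval (conj j) f‖) :=
          key (fun w => (N:ℝ)^D * ‖aeval w f‖)
  -- M is positive
  have hM0' : (0:ℝ) ≤ M := le_trans (abs_nonneg _) (hM 0)
  have hMpos : (0:ℝ) < M := by
    rcases hM0'.lt_or_eq with h|h
    · exact h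
    · exfalso
      apply hf
      have hf0 : f = 0 := by
        ext i
        have h4 := hM i
        rw [← h] at h4
        have h5 : (f.coeff i : ℝ) = 0 := abs_eq_zero.mp (le_antisymm h4 (abs_nonneg _))
        exact_mod_cast h5
      simp [hf0]
  -- bound on each conjugate value
  set B : ℝ := ((D:ℝ)+1) * M * ((H:ℝ)+1) ^ D with hB
  have hBpos : (0:ℝ) < B := by rw [hB]; positivity
  have hroot : ∀ j : Fin d, ‖aeval (conj j) f‖ ≤ B := by
    intro j
    have h1 : (aeval (conj j) f) = ∑ i ∈ Finset.range (D+1), (f.coeff i : ℂ) * (conj j)^i := by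
      rw [Polynomial.aeval_eq_sum_range' (lt_of_le_of_lt hD (Nat.lt_succ_self D))]
      exact Finset.sum_congr rfl fun i _ => by rw [zsmul_eq_mul]
    rw [h1]
    calc ‖∑ i ∈ Finset.range (D+1), (f.coeff i : ℂ) * (conj j)^i‖
        ≤ ∑ i ∈ Finset.range (D+1), ‖(f.coeff i : ℂ) * (conj j)^i‖ :=
          norm_sum_le _ _
      _ ≤ ∑ i ∈ Finset.range (D+1), M * ((H:ℝ)+1)^D := by
          refine Finset.sum_le_sum fun i hi => ?_
          rw [norm_mul, norm_pow]
          have h2 : ‖(f.coeff i : ℂ)‖ ≤ M := by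
            rw [Complex.norm_intCast]; exact hM i
          have h3 : ‖conj j‖ ^ i ≤ ((H:ℝ)+1)^D :=
            le_trans (pow_le_pow_left₀ (norm_nonneg _) (hbound j) i)
              (pow_le_pow_right₀ (le_add_of_nonneg_left (Nat.cast_nonneg H)) (Nat.lt_succ_iff.mp (Finset.mem_range.mp hi)))
          exact mul_le_mul h2 h3 (by positivity) hM0'
      _ = B := by rw [Finset.sum_const, Finset.card_range, hB]; push_cast; ring
  -- split off the factor at lam
  have habs0 : (0:ℝ) < ‖aeval lam f‖ := norm_pos_iff.mpr hf
  have hsplit : ∏ j : Fin d, ‖aeval (conj j) f‖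
      = ‖aeval lam f‖ * ∏ j ∈ Finset.univ.erase ⟨0, hd0⟩,
          ‖aeval (conj j) f‖ := by
    rw [← Finset.mul_prod_erase Finset.univ _ (Finset.mem_univ (⟨0, hd0⟩ : Fin d)), hconj0]
  have herase : ∏ j ∈ Finset.univ.erase (⟨0, hd0⟩ : Fin d), ‖aeval (conj j) f‖
      ≤ B ^ (d-1) := by
    have hcard : (Finset.univ.erase (⟨0, hd0⟩ : Fin d)).card = d - 1 := by
      rw [Finset.card_erase_of_mem (Finset.mem_univ _), Finset.card_univ, Fintype.card_fin]
    calc ∏ j ∈ Finset.univ.erase (⟨0, hd0⟩ : Fin d), ‖aeval (conj j) f‖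
        ≤ ∏ _j ∈ Finset.univ.erase (⟨0, hd0⟩ : Fin d), B :=
          Finset.prod_le_prod (fun j _ => norm_nonneg _) (fun j _ => hroot j)
      _ = B ^ (d-1) := by rw [Finset.prod_const, hcard]
  -- combine
  have hfinal : (1:ℝ) ≤ (N:ℝ)^(d*D) * (‖aeval lam f‖ * B^(d-1)) := by
    calc (1:ℝ) ≤ ∏ j : Fin d, ((N:ℝ)^D * ‖aeval (conj j) f‖) := habs
      _ = (N:ℝ)^(d*D) * ∏ j : Fin d, ‖aeval (conj j) f‖ := by
          rw [Finset.prod_mul_distrib, Finset.prod_const, Finset.card_univ, Fintype.card_fin,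
            ← pow_mul, mul_comm D d]
      _ = (N:ℝ)^(d*D) * (‖aeval lam f‖ * ∏ j ∈ Finset.univ.erase ⟨0, hd0⟩,
            ‖aeval (conj j) f‖) := by rw [hsplit]
      _ ≤ (N:ℝ)^(d*D) * (‖aeval lam f‖ * B^(d-1)) := by
          have hNpos : (0:ℝ) < (N:ℝ)^(d*D) := by positivity
          exact mul_le_mul_of_nonneg_left
            (mul_le_mul_of_nonneg_left herase habs0.le) hNpos.le
  have hACpos : (0:ℝ) < (N:ℝ)^(d*D) * B^(d-1) := by positivity
  rw [ge_iff_le, ← mul_inv, inv_le_iff_one_le_mul₀ hACpos]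
  calc (1:ℝ) ≤ (N:ℝ)^(d*D) * (‖aeval lam f‖ * B^(d-1)) := hfinal
    _ = ‖aeval lam f‖ * ((N:ℝ)^(d*D) * B^(d-1)) := by ring
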